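/- Let a, b be nonzero one-variable polynomials over ℂ of degree m and n respectively. The linear map ϖ sending s ∈ ℂ[z,w] to the family of jets ((1/(k! l!)) ∂^{k+l} s/∂z^k ∂w^l (ζ, η)) indexed by roots ζ of a, roots η of b, and 0 ≤ k ≤ d_a(ζ) − 1, 0 ≤ l ≤ d_b(η) − 1, restricted to the space of polynomials whose degree in z is less than m and whose degree in w is less than n, is a linear bijection onto ℂ^{m·n} (the direct sum over all roots (ζ,η) of the spaces ℂ^{d_a(ζ)·d_b(η)}). -/

import Mathlib

open MvPolynomial

lemma oneVar_zero (a p : Polynomial ℂ) (ha : a ≠ 0) (hdeg : p.degree < (a.natDegree : WithBot ℕ))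
    (h : ∀ ζ, a.IsRoot ζ → ∀ k, k < a.rootMultiplicity ζ →
      (Polynomial.derivative^[k] p).IsRoot ζ) :
    p = 0 := by
  by_contra hp
  have hle : a.roots ≤ p.roots := by
    rw [Multiset.le_iff_count]
    intro ζ
    classical
    rw [Polynomial.count_roots, Polynomial.count_roots]
    by_cases hz : a.rootMultiplicity ζ = 0
    · simp [hz]
    · have hroot : a.IsRoot ζ := (Polynomial.rootMultiplicity_pos ha).mp (Nat.pos_of_ne_zero hz)
      have : a.rootMultiplicity ζ - 1 < p.rootMultiplicity ζ := by
        apply Polynomial.lt_rootMultiplicity_of_isRoot_iterate_derivative hp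
        intro m hm
        exact h ζ hroot m (lt_of_le_of_lt hm (Nat.pred_lt hz))
      omega
  have h1 : a.roots.card = a.natDegree := Polynomial.splits_iff_card_roots.mp (IsAlgClosed.splits a)
  have h2 : Multiset.card p.roots ≤ p.natDegree := p.card_roots'
  have h3 : p.natDegree < a.natDegree := by
    exact (Polynomial.natDegree_lt_iff_degree_lt hp).mpr hdeg
  have := Multiset.card_le_card hle
  omega

lemma hermite_exists (a : Polynomial ℂ) (ha : a ≠ 0) (c : ℂ × ℕ → ℂ) :
    ∃ p : Polynomial ℂ, p.degree < (a.natDegree : WithBot ℕ) ∧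
      ∀ ζ k, a.IsRoot ζ → k < a.rootMultiplicity ζ →
        Polynomial.eval ζ (Polynomial.derivative^[k] p) = c (ζ, k) := by
  classical
  set S := {x : ℂ × ℕ // a.IsRoot x.1 ∧ x.2 < a.rootMultiplicity x.1} with hS
  let e : S ≃ Σ ζ : a.roots.toFinset, Fin (a.rootMultiplicity (ζ : ℂ)) :=
    { toFun := fun x => ⟨⟨x.1.1, by
        rw [Multiset.mem_toFinset, Polynomial.mem_roots ha]; exact x.2.1⟩, ⟨x.1.2, x.2.2⟩⟩
      invFun := fun y => ⟨(y.1, y.2), ⟨((Polynomial.mem_roots ha).mp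
        (Multiset.mem_toFinset.mp y.1.2)), y.2.2⟩⟩
      left_inv := fun x => rfl
      right_inv := fun y => rfl }
  haveI : Fintype S := Fintype.ofEquiv _ e.symm
  have hcard : Fintype.card S = a.natDegree := by
    rw [Fintype.card_congr e, Fintype.card_sigma]
    simp only [Fintype.card_fin]
    have h1 : ∑ ζ : a.roots.toFinset, a.rootMultiplicity (ζ : ℂ)
        = ∑ ζ ∈ a.roots.toFinset, a.rootMultiplicity ζ := Finset.sum_coe_sort a.roots.toFinset (fun ζ => a.rootMultiplicity ζ)
    rw [h1]
    have h2 : ∀ ζ ∈ a.roots.toFinset, a.rootMultiplicity ζ = a.roots.count ζ := by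
      intro ζ _; rw [Polynomial.count_roots]
    rw [Finset.sum_congr rfl h2, Multiset.toFinset_sum_count_eq]
    exact Polynomial.splits_iff_card_roots.mp (IsAlgClosed.splits a)
  let J : Polynomial.degreeLT ℂ a.natDegree →ₗ[ℂ] (S → ℂ) :=
    LinearMap.pi (fun x => (Polynomial.leval x.1.1) ∘ₗ
      ((Polynomial.derivative : Polynomial ℂ →ₗ[ℂ] Polynomial ℂ) ^ x.1.2) ∘ₗ
      (Submodule.subtype _))
  have hJ : ∀ (p : Polynomial.degreeLT ℂ a.natDegree) (x : S),
      J p x = Polynomial.eval x.1.1 (Polynomial.derivative^[x.1.2] (p : Polynomial ℂ)) := by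
    intro p x
    simp [J, Module.End.pow_apply, Polynomial.leval_apply]
  have hinj : Function.Injective J := by
    rw [← LinearMap.ker_eq_bot, LinearMap.ker_eq_bot']
    intro p hp
    have : (p : Polynomial ℂ) = 0 := by
      apply oneVar_zero a _ ha (Polynomial.mem_degreeLT.mp p.2)
      intro ζ hζ k hk
      have := congrFun hp ⟨(ζ, k), ⟨hζ, hk⟩⟩
      rw [hJ] at this
      exact this
    exact Subtype.ext this
  haveI : FiniteDimensional ℂ (Polynomial.degreeLT ℂ a.natDegree) :=
    Module.Finite.equiv (Polynomial.degreeLTEquiv ℂ a.natDegree).symm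
  have hfr : Module.finrank ℂ (Polynomial.degreeLT ℂ a.natDegree)
      = Module.finrank ℂ (S → ℂ) := by
    rw [(Polynomial.degreeLTEquiv ℂ a.natDegree).finrank_eq, Module.finrank_pi,
      Module.finrank_pi, Fintype.card_fin, hcard]
  have hsurj : Function.Surjective J :=
    (LinearMap.injective_iff_surjective_of_finrank_eq_finrank hfr).mp hinj
  obtain ⟨p, hp⟩ := hsurj (fun x => c x.1)
  refine ⟨p, Polynomial.mem_degreeLT.mp p.2, ?_⟩
  intro ζ k hζ hk
  have := congrFun hp ⟨(ζ, k), ⟨hζ, hk⟩⟩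
  rw [hJ] at this
  exact this

lemma deriv_aeval_z (η : ℂ) (t : MvPolynomial (Fin 2) ℂ) :
    Polynomial.derivative (aeval ![Polynomial.X, Polynomial.C η] t)
      = aeval ![Polynomial.X, Polynomial.C η] (pderiv 0 t) := by
  induction t using MvPolynomial.induction_on with
  | C r => simp
  | add p q hp hq => simp [hp, hq]
  | mul_X p i hp =>
    rw [map_mul, Polynomial.derivative_mul, hp, pderiv_mul, map_add, map_mul, map_mul]
    congr 1
    fin_cases i <;> simp

lemma deriv_aeval_w (z₀ : ℂ) (t : MvPolynomial (Fin 2) ℂ) :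
    Polynomial.derivative (aeval ![Polynomial.C z₀, Polynomial.X] t)
      = aeval ![Polynomial.C z₀, Polynomial.X] (pderiv 1 t) := by
  induction t using MvPolynomial.induction_on with
  | C r => simp
  | add p q hp hq => simp [hp, hq]
  | mul_X p i hp =>
    rw [map_mul, Polynomial.derivative_mul, hp, pderiv_mul, map_add, map_mul, map_mul]
    congr 1
    fin_cases i <;> simp

lemma eval_aeval_z (z₀ η : ℂ) (t : MvPolynomial (Fin 2) ℂ) :
    Polynomial.eval z₀ (aeval ![Polynomial.X, Polynomial.C η] t) = eval ![z₀, η] t := by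
  induction t using MvPolynomial.induction_on with
  | C r => simp
  | add p q hp hq => simp [hp, hq]
  | mul_X p i hp => rw [map_mul, Polynomial.eval_mul, hp, map_mul]; congr 1; fin_cases i <;> simp

lemma eval_aeval_w (z₀ η : ℂ) (t : MvPolynomial (Fin 2) ℂ) :
    Polynomial.eval η (aeval ![Polynomial.C z₀, Polynomial.X] t) = eval ![z₀, η] t := by
  induction t using MvPolynomial.induction_on with
  | C r => simp
  | add p q hp hq => simp [hp, hq]
  | mul_X p i hp => rw [map_mul, Polynomial.eval_mul, hp, map_mul]; congr 1; fin_cases i <;> simp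
lemma eval_pderiv0_iter (ζ η : ℂ) (k : ℕ) (t : MvPolynomial (Fin 2) ℂ) :
    eval ![ζ, η] ((fun u => pderiv (0 : Fin 2) u)^[k] t)
      = Polynomial.eval ζ (Polynomial.derivative^[k]
          (aeval ![Polynomial.X, Polynomial.C η] t)) := by
  induction k generalizing t with
  | zero => simpa using (eval_aeval_z ζ η t).symm
  | succ k ih =>
    rw [Function.iterate_succ_apply, Function.iterate_succ_apply, ih (pderiv 0 t),
      deriv_aeval_z]

lemma eval_pderiv1_iter (z₀ η : ℂ) (l : ℕ) (t : MvPolynomial (Fin 2) ℂ) :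
    eval ![z₀, η] ((fun u => pderiv (1 : Fin 2) u)^[l] t)
      = Polynomial.eval η (Polynomial.derivative^[l]
          (aeval ![Polynomial.C z₀, Polynomial.X] t)) := by
  induction l generalizing t with
  | zero => simpa using (eval_aeval_w z₀ η t).symm
  | succ l ih =>
    rw [Function.iterate_succ_apply, Function.iterate_succ_apply, ih (pderiv 1 t),
      deriv_aeval_w]

lemma degree_aeval_z_lt (η : ℂ) (m : ℕ) (t : MvPolynomial (Fin 2) ℂ)
    (ht : ∀ d ∈ t.support, d 0 < m) :
    (aeval ![Polynomial.X, Polynomial.C η] t).degree < (m : WithBot ℕ) := by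
  rw [aeval_def, eval₂_eq']
  apply lt_of_le_of_lt (Polynomial.degree_sum_le _ _)
  apply (Finset.sup_lt_iff (by exact WithBot.bot_lt_coe m)).mpr
  intro d hd
  have he : (algebraMap ℂ (Polynomial ℂ)) (coeff d t)
      * ∏ i, (![Polynomial.X, Polynomial.C η]) i ^ d i
      = Polynomial.C (coeff d t * η ^ d 1) * Polynomial.X ^ d 0 := by
    rw [Fin.prod_univ_two]
    simp only [Matrix.cons_val_zero, Matrix.cons_val_one, Matrix.head_cons,
      Polynomial.algebraMap_eq, Polynomial.C_mul, Polynomial.C_pow]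
    ring
  rw [he]
  exact lt_of_le_of_lt (Polynomial.degree_C_mul_X_pow_le _ _)
    (WithBot.coe_lt_coe.mpr (ht d hd))

lemma degree_aeval_w_lt (z₀ : ℂ) (n : ℕ) (t : MvPolynomial (Fin 2) ℂ)
    (ht : ∀ d ∈ t.support, d 1 < n) :
    (aeval ![Polynomial.C z₀, Polynomial.X] t).degree < (n : WithBot ℕ) := by
  rw [aeval_def, eval₂_eq']
  apply lt_of_le_of_lt (Polynomial.degree_sum_le _ _)
  apply (Finset.sup_lt_iff (by exact WithBot.bot_lt_coe n)).mpr
  intro d hd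
  have he : (algebraMap ℂ (Polynomial ℂ)) (coeff d t)
      * ∏ i, (![Polynomial.C z₀, Polynomial.X]) i ^ d i
      = Polynomial.C (coeff d t * z₀ ^ d 0) * Polynomial.X ^ d 1 := by
    rw [Fin.prod_univ_two]
    simp only [Matrix.cons_val_zero, Matrix.cons_val_one, Matrix.head_cons,
      Polynomial.algebraMap_eq, Polynomial.C_mul, Polynomial.C_pow]
    ring
  rw [he]
  exact lt_of_le_of_lt (Polynomial.degree_C_mul_X_pow_le _ _)
    (WithBot.coe_lt_coe.mpr (ht d hd))

lemma pderiv_support_sub (i : Fin 2) (t : MvPolynomial (Fin 2) ℂ) :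
    ∀ d ∈ (pderiv i t).support, ∃ s ∈ t.support, d = s - Finsupp.single i 1 := by
  induction t using MvPolynomial.monomial_add_induction_on with
  | C a => intro d hd; simp [pderiv_C] at hd
  | monomial_add a c f hf hc ih =>
    intro d hd
    rw [map_add] at hd
    rcases Finset.mem_union.mp (MvPolynomial.support_add hd) with h1 | h2
    · rw [pderiv_monomial] at h1
      have hda : d = a - Finsupp.single i 1 := by
        have := MvPolynomial.support_monomial_subset h1
        simpa using this
      refine ⟨a, ?_, hda⟩
      rw [MvPolynomial.mem_support_iff, MvPolynomial.coeff_add, MvPolynomial.coeff_monomial,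
        if_pos rfl]
      have hf0 : coeff a f = 0 := Finsupp.notMem_support_iff.mp hf
      rw [hf0, add_zero]
      exact hc
    · obtain ⟨s, hs, hds⟩ := ih d h2
      refine ⟨s, ?_, hds⟩
      have hsa : s ≠ a := fun h => hf (h ▸ hs)
      rw [MvPolynomial.mem_support_iff, MvPolynomial.coeff_add, MvPolynomial.coeff_monomial,
        if_neg (fun h => hsa h.symm), zero_add]
      exact MvPolynomial.mem_support_iff.mp hs

lemma pderiv1_polyaeval (q : Polynomial ℂ) :
    pderiv (1 : Fin 2) (Polynomial.aeval (X 1 : MvPolynomial (Fin 2) ℂ) q)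
      = Polynomial.aeval (X 1 : MvPolynomial (Fin 2) ℂ) (Polynomial.derivative q) := by
  induction q using Polynomial.induction_on' with
  | add p q hp hq => simp [hp, hq]
  | monomial n c =>
    simp only [Polynomial.aeval_monomial, Polynomial.derivative_monomial,
      MvPolynomial.algebraMap_eq, pderiv_C_mul, pderiv_pow, pderiv_X_self, mul_one,
      map_mul, map_natCast]
    ring

lemma pderiv1_term (i : ℕ) (q : Polynomial ℂ) :
    pderiv (1 : Fin 2) (X 0 ^ i * Polynomial.aeval (X 1 : MvPolynomial (Fin 2) ℂ) q)
      = X 0 ^ i * Polynomial.aeval (X 1 : MvPolynomial (Fin 2) ℂ) (Polynomial.derivative q) := by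
  rw [pderiv_mul, pderiv_pow, pderiv_X_of_ne (by decide), pderiv1_polyaeval]
  ring

lemma pderiv1_iter_term (l i : ℕ) (q : Polynomial ℂ) :
    (fun t => pderiv (1 : Fin 2) t)^[l] (X 0 ^ i * Polynomial.aeval (X 1 :
        MvPolynomial (Fin 2) ℂ) q)
      = X 0 ^ i * Polynomial.aeval (X 1 : MvPolynomial (Fin 2) ℂ) (Polynomial.derivative^[l] q) := by
  induction l generalizing q with
  | zero => rfl
  | succ l ih =>
    rw [Function.iterate_succ_apply, Function.iterate_succ_apply, pderiv1_term, ih]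

lemma aeval_z_term (η : ℂ) (i : ℕ) (q : Polynomial ℂ) :
    aeval ![Polynomial.X, Polynomial.C η]
        (X (0 : Fin 2) ^ i * Polynomial.aeval (X 1 : MvPolynomial (Fin 2) ℂ) q)
      = Polynomial.C (Polynomial.eval η q) * Polynomial.X ^ i := by
  rw [map_mul, map_pow, aeval_X]
  have : aeval ![Polynomial.X, Polynomial.C η]
      (Polynomial.aeval (X 1 : MvPolynomial (Fin 2) ℂ) q) = Polynomial.C (Polynomial.eval η q) := by
    induction q using Polynomial.induction_on' with
    | add p q hp hq => simp [hp, hq]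
    | monomial n c =>
      rw [Polynomial.aeval_monomial, map_mul, map_pow, aeval_X, MvPolynomial.algebraMap_eq, aeval_C,
        Polynomial.eval_monomial]
      simp only [Matrix.cons_val_one, Matrix.head_cons, Polynomial.algebraMap_eq, Matrix.cons_val_zero]
      rw [← Polynomial.C_pow, ← Polynomial.C_mul]
  rw [this]
  simp only [Matrix.cons_val_zero]
  ring

lemma iter_pderiv_sub (i : Fin 2) (l : ℕ) (t u : MvPolynomial (Fin 2) ℂ) :
    (fun t => pderiv i t)^[l] (t - u)
      = (fun t => pderiv i t)^[l] t - (fun t => pderiv i t)^[l] u := by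
  induction l generalizing t u with
  | zero => rfl
  | succ l ih =>
    rw [Function.iterate_succ_apply, Function.iterate_succ_apply,
      Function.iterate_succ_apply, map_sub, ih]

lemma iter_pderiv_sum {α : Type*} (i : Fin 2) (l : ℕ) (s : Finset α)
    (f : α → MvPolynomial (Fin 2) ℂ) :
    (fun t => pderiv i t)^[l] (∑ j ∈ s, f j) = ∑ j ∈ s, (fun t => pderiv i t)^[l] (f j) := by
  induction l with
  | zero => rfl
  | succ l ih =>
    rw [Function.iterate_succ_apply', ih, map_sum]
    exact Finset.sum_congr rfl fun j _ => (Function.iterate_succ_apply' _ _ _).symm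

lemma jets_zero (a b : Polynomial ℂ) (ha : a ≠ 0) (hb : b ≠ 0)
    (s : MvPolynomial (Fin 2) ℂ)
    (hs : ∀ d ∈ s.support, d 0 < a.natDegree ∧ d 1 < b.natDegree)
    (h : ∀ ζ η k l, a.IsRoot ζ → b.IsRoot η → k < a.rootMultiplicity ζ →
      l < b.rootMultiplicity η →
      eval ![ζ, η] ((fun t => pderiv (0 : Fin 2) t)^[k]
        ((fun t => pderiv (1 : Fin 2) t)^[l] s)) = 0) :
    s = 0 := by
  have hsupl : ∀ l, ∀ d ∈ ((fun t => pderiv (1 : Fin 2) t)^[l] s).support,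
      d 0 < a.natDegree := by
    intro l
    induction l with
    | zero => intro d hd; exact (hs d hd).1
    | succ l ih =>
      intro d hd
      rw [Function.iterate_succ_apply'] at hd
      obtain ⟨e, he, rfl⟩ := pderiv_support_sub 1 _ d hd
      have h0 : ((e - Finsupp.single 1 1 : Fin 2 →₀ ℕ)) 0 = e 0 := by
        rw [Finsupp.tsub_apply]
        simp [Finsupp.single_apply]
      rw [h0]
      exact ih e he
  have hr : ∀ η l, b.IsRoot η → l < b.rootMultiplicity η →
      aeval ![Polynomial.X, Polynomial.C η] ((fun t => pderiv (1 : Fin 2) t)^[l] s) = 0 := by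
    intro η l hη hl
    apply oneVar_zero a _ ha (degree_aeval_z_lt η _ _ (hsupl l))
    intro ζ hζ k hk
    rw [Polynomial.IsRoot, ← eval_pderiv0_iter]
    exact h ζ η k l hζ hη hk hl
  have hq : ∀ z₀ : ℂ, aeval ![Polynomial.C z₀, Polynomial.X] s = 0 := by
    intro z₀
    apply oneVar_zero b _ hb (degree_aeval_w_lt z₀ _ _ (fun d hd => (hs d hd).2))
    intro η hη l hl
    rw [Polynomial.IsRoot, ← eval_pderiv1_iter]
    rw [← eval_aeval_z z₀ η _, hr η l hη hl]
    simp
  apply MvPolynomial.funext (q := 0)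
  intro x
  have hx := congrArg (Polynomial.eval (x 1)) (hq (x 0))
  rw [eval_aeval_w] at hx
  have hvec : ![x 0, x 1] = x := by
    funext i; fin_cases i <;> rfl
  rw [hvec] at hx
  simpa using hx

lemma hqdeg_aux (b : Polynomial ℂ) (hn : 0 < b.natDegree) (q : Polynomial ℂ)
    (h : q.degree < (b.natDegree : WithBot ℕ)) : q.natDegree < b.natDegree := by
  by_cases h0 : q = 0
  · rw [h0, Polynomial.natDegree_zero]; exact hn
  · exact (Polynomial.natDegree_lt_iff_degree_lt h0).mpr h

lemma term_support (i : ℕ) (q : Polynomial ℂ) :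
    ∀ d ∈ (X (0 : Fin 2) ^ i * Polynomial.aeval (X 1 : MvPolynomial (Fin 2) ℂ) q).support,
      d 0 = i ∧ d 1 ≤ q.natDegree := by
  have hrepr : X (0 : Fin 2) ^ i * Polynomial.aeval (X 1 : MvPolynomial (Fin 2) ℂ) q
      = ∑ j ∈ Finset.range (q.natDegree + 1),
          monomial (Finsupp.single (0 : Fin 2) i + Finsupp.single (1 : Fin 2) j) (q.coeff j) := by
    conv_lhs => rw [Polynomial.as_sum_range q]
    rw [map_sum, Finset.mul_sum]
    refine Finset.sum_congr rfl fun j _ => ?_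
    rw [Polynomial.aeval_monomial, MvPolynomial.algebraMap_eq, X_pow_eq_monomial,
      X_pow_eq_monomial, mul_left_comm, monomial_mul, C_mul_monomial]
    simp
  intro d hd
  rw [hrepr] at hd
  obtain ⟨j, hj, hdj⟩ := Finset.mem_biUnion.mp (MvPolynomial.support_sum hd)
  have hds := MvPolynomial.support_monomial_subset hdj
  rw [Finset.mem_singleton] at hds
  subst hds
  constructor
  · simp [Finsupp.single_apply]
  · have : j ≤ q.natDegree := by
      rw [Finset.mem_range] at hj; omega
    simpa [Finsupp.single_apply] using this

lemma jets_surj (a b : Polynomial ℂ) (ha : a ≠ 0) (hb : b ≠ 0)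
    (hm : 0 < a.natDegree) (hn : 0 < b.natDegree) (R : ℂ × ℂ × ℕ × ℕ → ℂ) :
    ∃ s : MvPolynomial (Fin 2) ℂ,
      (∀ d ∈ s.support, d 0 < a.natDegree ∧ d 1 < b.natDegree) ∧
      ∀ ζ η k l, a.IsRoot ζ → b.IsRoot η → k < a.rootMultiplicity ζ →
        l < b.rootMultiplicity η →
        eval ![ζ, η] ((fun t => pderiv (0 : Fin 2) t)^[k]
          ((fun t => pderiv (1 : Fin 2) t)^[l] s)) = R (ζ, η, k, l) := by
  classical
  choose P hP1 hP2 using fun (η : ℂ) (l : ℕ) =>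
    hermite_exists a ha (fun x => R (x.1, η, x.2, l))
  choose q hq1 hq2 using fun (i : ℕ) =>
    hermite_exists b hb (fun y => (P y.1 y.2).coeff i)
  refine ⟨∑ i ∈ Finset.range a.natDegree, (X 0 ^ i * Polynomial.aeval (X 1 : MvPolynomial (Fin 2) ℂ) (q i) : MvPolynomial (Fin 2) ℂ), ?_, ?_⟩
  · intro d hd
    obtain ⟨i, hi, hdi⟩ := Finset.mem_biUnion.mp (MvPolynomial.support_sum hd)
    obtain ⟨h0, h1⟩ := term_support i (q i) d hdi
    rw [Finset.mem_range] at hi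
    exact ⟨h0 ▸ hi, lt_of_le_of_lt h1 (hqdeg_aux b hn (q i) (hq1 i))⟩
  · intro ζ η k l hζ hη hk hl
    have h1 : (fun t => pderiv (1 : Fin 2) t)^[l]
        (∑ i ∈ Finset.range a.natDegree, (X 0 ^ i * Polynomial.aeval (X 1 : MvPolynomial (Fin 2) ℂ) (q i) :
            MvPolynomial (Fin 2) ℂ))
        = ∑ i ∈ Finset.range a.natDegree,
            (X 0 ^ i * Polynomial.aeval (X 1 : MvPolynomial (Fin 2) ℂ) (Polynomial.derivative^[l] (q i)) :
              MvPolynomial (Fin 2) ℂ) := by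
      rw [iter_pderiv_sum]
      exact Finset.sum_congr rfl fun i _ => pderiv1_iter_term l i (q i)
    rw [h1, eval_pderiv0_iter]
    have h2 : aeval ![Polynomial.X, Polynomial.C η]
        (∑ i ∈ Finset.range a.natDegree,
          (X 0 ^ i * Polynomial.aeval (X 1 : MvPolynomial (Fin 2) ℂ) (Polynomial.derivative^[l] (q i)) :
            MvPolynomial (Fin 2) ℂ)) = P η l := by
      rw [map_sum]
      have hterm : ∀ i ∈ Finset.range a.natDegree,
          aeval ![Polynomial.X, Polynomial.C η]
            (X (0 : Fin 2) ^ i * Polynomial.aeval (X 1 : MvPolynomial (Fin 2) ℂ) (Polynomial.derivative^[l] (q i)))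
          = Polynomial.C ((P η l).coeff i) * Polynomial.X ^ i := by
        intro i _
        rw [aeval_z_term, hq2 i η l hη hl]
      rw [Finset.sum_congr rfl hterm]
      conv_rhs => rw [Polynomial.as_sum_range' (P η l) a.natDegree
        (hqdeg_aux a hm (P η l) (hP1 η l))]
      exact Finset.sum_congr rfl fun i _ => Polynomial.C_mul_X_pow_eq_monomial
    rw [h2]
    exact hP2 η l ζ k hζ hk

lemma no_root (a : Polynomial ℂ) (ha : a ≠ 0) (h0 : a.natDegree = 0) (ζ : ℂ) :
    ¬ a.IsRoot ζ := by
  obtain ⟨c, rfl⟩ := Polynomial.natDegree_eq_zero.mp h0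
  intro h
  rw [Polynomial.IsRoot, Polynomial.eval_C] at h
  exact ha (by rw [h, map_zero])

/-- For nonzero `a, b ∈ ℂ[z]` of degrees `m, n`, the jet map `ϖ`,
`s ↦ ((1/(k! l!)) ∂^{k+l} s/∂z^k ∂w^l (ζ, η))` indexed by roots `ζ` of `a`, roots `η` of `b`
and `k < d_a(ζ)`, `l < d_b(η)`, restricted to the space of two-variable polynomials of
`z`-degree `< m` and `w`-degree `< n`, is a bijection onto the direct sum
`⊕_{(ζ,η)} ℂ^{d_a(ζ)·d_b(η)} ≅ ℂ^{m·n}` (realized as the space of all families indexed as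
above).  The map is linear in `s` by construction. -/
theorem stmt_9 (a b : Polynomial ℂ) (ha : a ≠ 0) (hb : b ≠ 0) :
    Function.Bijective
      (fun (s : {s : MvPolynomial (Fin 2) ℂ //
            ∀ d ∈ s.support, d 0 < a.natDegree ∧ d 1 < b.natDegree})
          (x : {x : ℂ × ℂ × ℕ × ℕ // a.IsRoot x.1 ∧ b.IsRoot x.2.1 ∧
            x.2.2.1 < Polynomial.rootMultiplicity x.1 a ∧
            x.2.2.2 < Polynomial.rootMultiplicity x.2.1 b}) =>
        (((x.1.2.2.1.factorial * x.1.2.2.2.factorial : ℕ) : ℂ))⁻¹ *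
          MvPolynomial.eval ![x.1.1, x.1.2.1]
            ((fun t => MvPolynomial.pderiv (0 : Fin 2) t)^[x.1.2.2.1]
              ((fun t => MvPolynomial.pderiv (1 : Fin 2) t)^[x.1.2.2.2] s.1))) := by
  constructor
  · intro s₁ s₂ hss
    apply Subtype.ext
    have key : s₁.1 - s₂.1 = 0 := by
      apply jets_zero a b ha hb
      · intro d hd
        rw [sub_eq_add_neg] at hd
        rcases Finset.mem_union.mp (MvPolynomial.support_add hd) with h1 | h2
        · exact s₁.2 d h1
        · rw [MvPolynomial.support_neg] at h2
          exact s₂.2 d h2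
      · intro ζ η k l hζ hη hk hl
        have hx := congrFun hss ⟨(ζ, η, k, l), ⟨hζ, hη, hk, hl⟩⟩
        simp only at hx
        have hfac : ((k.factorial * l.factorial : ℕ) : ℂ) ≠ 0 := by
          exact_mod_cast Nat.mul_ne_zero k.factorial_ne_zero l.factorial_ne_zero
        have h2 := mul_left_cancel₀ (inv_ne_zero hfac) hx
        rw [iter_pderiv_sub, iter_pderiv_sub, map_sub, h2, sub_self]
    rw [sub_eq_zero] at key
    exact key
  · intro c
    by_cases hm0 : a.natDegree = 0
    · refine ⟨⟨0, fun d hd => absurd hd (by simp)⟩, ?_⟩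
      funext x
      exact absurd x.2.1 (no_root a ha hm0 _)
    by_cases hn0 : b.natDegree = 0
    · refine ⟨⟨0, fun d hd => absurd hd (by simp)⟩, ?_⟩
      funext x
      exact absurd x.2.2.1 (no_root b hb hn0 _)
    have hm : 0 < a.natDegree := Nat.pos_of_ne_zero hm0
    have hn : 0 < b.natDegree := Nat.pos_of_ne_zero hn0
    classical
    obtain ⟨s, hsup, hjet⟩ := jets_surj a b ha hb hm hn (fun y =>
      if h : a.IsRoot y.1 ∧ b.IsRoot y.2.1 ∧ y.2.2.1 < a.rootMultiplicity y.1 ∧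
          y.2.2.2 < b.rootMultiplicity y.2.1
      then ((y.2.2.1.factorial * y.2.2.2.factorial : ℕ) : ℂ) * c ⟨y, h⟩ else 0)
    refine ⟨⟨s, hsup⟩, ?_⟩
    funext x
    obtain ⟨⟨ζ, η, k, l⟩, hx⟩ := x
    simp only
    rw [hjet ζ η k l hx.1 hx.2.1 hx.2.2.1 hx.2.2.2, dif_pos hx]
    have hfac : ((k.factorial * l.factorial : ℕ) : ℂ) ≠ 0 := by
      exact_mod_cast Nat.mul_ne_zero k.factorial_ne_zero l.factorial_ne_zero
    rw [inv_mul_cancel_left₀ hfac]
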